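/- For every integer N ≥ 2 and every integer t with 1 ≤ t ≤ N-1, one has |((1 - ζ)/(1 - ζ^t))³ · (1 + ζ^t)/(1 + ζ)| = (sin(π/N)/sin(tπ/N))³ · |cos(tπ/N)|/cos(π/N) ≤ 1, where ζ = e^{2πi/N} and N is such that ζ^t ≠ -1 (e.g. N odd or 2t ≠ N). -/

import Mathlib

open Complex Real

lemma abs_one_sub_exp (θ : ℝ) :
    ‖1 - Complex.exp (θ * Complex.I)‖ = 2 * |Real.sin (θ / 2)| := by
  rw [Complex.exp_mul_I, ← Complex.ofReal_cos, ← Complex.ofReal_sin]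
  have h : (1 : ℂ) - (Real.cos θ + Real.sin θ * Complex.I)
      = ((1 - Real.cos θ : ℝ) : ℂ) + ((-Real.sin θ : ℝ) : ℂ) * Complex.I := by
    push_cast; ring
  rw [h, Complex.norm_add_mul_I]
  have hc : Real.cos (θ / 2) ^ 2 = 1 / 2 + Real.cos θ / 2 := by
    have := Real.cos_sq (θ / 2)
    rwa [show 2 * (θ / 2) = θ by ring] at this
  have hs := Real.sin_sq_add_cos_sq (θ / 2)
  have h2 := Real.sin_sq_add_cos_sq θ
  have : (1 - Real.cos θ) ^ 2 + (-Real.sin θ) ^ 2 = (2 * |Real.sin (θ / 2)|) ^ 2 := by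
    rw [mul_pow, _root_.sq_abs]; nlinarith
  rw [this, Real.sqrt_sq (by positivity)]

lemma abs_one_add_exp (θ : ℝ) :
    ‖1 + Complex.exp (θ * Complex.I)‖ = 2 * |Real.cos (θ / 2)| := by
  rw [Complex.exp_mul_I, ← Complex.ofReal_cos, ← Complex.ofReal_sin]
  have h : (1 : ℂ) + (Real.cos θ + Real.sin θ * Complex.I)
      = ((1 + Real.cos θ : ℝ) : ℂ) + ((Real.sin θ : ℝ) : ℂ) * Complex.I := by
    push_cast; ring
  rw [h, Complex.norm_add_mul_I]
  have hc : Real.cos (θ / 2) ^ 2 = 1 / 2 + Real.cos θ / 2 := by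
    have := Real.cos_sq (θ / 2)
    rwa [show 2 * (θ / 2) = θ by ring] at this
  have h2 := Real.sin_sq_add_cos_sq θ
  have : (1 + Real.cos θ) ^ 2 + (Real.sin θ) ^ 2 = (2 * |Real.cos (θ / 2)|) ^ 2 := by
    rw [mul_pow, _root_.sq_abs]; nlinarith
  rw [this, Real.sqrt_sq (by positivity)]

theorem stmt_4 (N : ℕ) (hN : 2 ≤ N) (t : ℕ) (ht1 : 1 ≤ t) (ht2 : t ≤ N - 1)
    (ζ : ℂ) (hζ : ζ = Complex.exp (2 * Real.pi * Complex.I / N))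
    (hne : ζ ^ t ≠ -1) :
    ‖((1 - ζ) / (1 - ζ ^ t)) ^ 3 * ((1 + ζ ^ t) / (1 + ζ))‖ =
      (Real.sin (Real.pi / N) / Real.sin (t * Real.pi / N)) ^ 3 *
        |Real.cos (t * Real.pi / N)| / Real.cos (Real.pi / N) ∧
    ‖((1 - ζ) / (1 - ζ ^ t)) ^ 3 * ((1 + ζ ^ t) / (1 + ζ))‖ ≤ 1 := by
  -- First rule out N = 2
  have hN3 : 3 ≤ N := by
    by_contra h
    push_neg at h
    interval_cases N
    · interval_cases t
      apply hne
      rw [hζ]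
      rw [pow_one]
      rw [show (2 * Real.pi * Complex.I / (2 : ℕ) : ℂ) = Real.pi * Complex.I by push_cast; ring]
      exact Complex.exp_pi_mul_I
  have hNpos : (0 : ℝ) < N := by positivity
  -- Express ζ and ζ^t as exponentials of real angles
  have hζ' : ζ = Complex.exp ((2 * Real.pi / N : ℝ) * Complex.I) := by
    rw [hζ]; push_cast; ring_nf
  have hζt : ζ ^ t = Complex.exp ((2 * t * Real.pi / N : ℝ) * Complex.I) := by
    rw [hζ', ← Complex.exp_nat_mul]
    congr 1
    push_cast; ring
  have h1s : ‖1 - ζ‖ = 2 * |Real.sin (Real.pi / N)| := by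
    rw [hζ', abs_one_sub_exp]
    norm_num
    ring_nf
  have hts : ‖1 - ζ ^ t‖ = 2 * |Real.sin (t * Real.pi / N)| := by
    rw [hζt, abs_one_sub_exp]
    ring_nf
  have h1c : ‖1 + ζ‖ = 2 * |Real.cos (Real.pi / N)| := by
    rw [hζ', abs_one_add_exp]
    ring_nf
  have htc : ‖1 + ζ ^ t‖ = 2 * |Real.cos (t * Real.pi / N)| := by
    rw [hζt, abs_one_add_exp]
    ring_nf
  -- positivity facts
  set a := Real.pi / N with ha
  set x := t * Real.pi / N with hx
  have hapos : 0 < a := by positivity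
  have hale : a ≤ Real.pi / 3 := by
    rw [ha]
    apply div_le_div_of_nonneg_left Real.pi_pos.le (by norm_num)
    exact_mod_cast hN3
  have h1t : (1 : ℝ) ≤ t := by exact_mod_cast ht1
  have hax : a ≤ x := by
    rw [ha, hx, div_le_div_iff_of_pos_right hNpos]
    nlinarith [Real.pi_pos]
  have hxpi : x ≤ Real.pi - a := by
    rw [ha, hx]
    have htN : (t : ℝ) + 1 ≤ N := by
      have h' : t + 1 ≤ N := by omega
      exact_mod_cast h'
    rw [div_le_iff₀ hNpos]
    have hp := Real.pi_pos
    have hNne : (N : ℝ) ≠ 0 := ne_of_gt hNpos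
    have : π / ↑N * ↑N = π := div_mul_cancel₀ _ hNne
    nlinarith
  have hsa : 0 < Real.sin a := Real.sin_pos_of_pos_of_lt_pi hapos
    (lt_of_le_of_lt hale (by linarith [Real.pi_pos]))
  have hsx : 0 < Real.sin x := Real.sin_pos_of_pos_of_lt_pi (lt_of_lt_of_le hapos hax)
    (by linarith)
  have hca : 0 < Real.cos a := Real.cos_pos_of_mem_Ioo
    ⟨by linarith, lt_of_le_of_lt hale (by linarith [Real.pi_pos])⟩
  -- key monotonicity facts
  have hsin : Real.sin a ≤ Real.sin x := by
    rcases le_or_gt x (Real.pi / 2) with h | h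
    · exact Real.sin_le_sin_of_le_of_le_pi_div_two (by linarith) h hax
    · rw [← Real.sin_pi_sub x]
      exact Real.sin_le_sin_of_le_of_le_pi_div_two (by linarith) (by linarith) (by linarith)
  have hcos : |Real.cos x| ≤ Real.cos a := by
    rw [abs_le]
    constructor
    · have := Real.cos_le_cos_of_nonneg_of_le_pi hapos.le
        (by linarith : Real.pi - x ≤ Real.pi) (by linarith : a ≤ Real.pi - x)
      rw [Real.cos_pi_sub] at this
      linarith
    · exact Real.cos_le_cos_of_nonneg_of_le_pi hapos.le (by linarith) hax
  -- compute the absolute value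
  have hAbs : ‖((1 - ζ) / (1 - ζ ^ t)) ^ 3 * ((1 + ζ ^ t) / (1 + ζ))‖ =
      (Real.sin a / Real.sin x) ^ 3 * |Real.cos x| / Real.cos a := by
    rw [norm_mul, norm_pow, norm_div, norm_div, h1s, hts, h1c, htc,
      abs_of_pos hsa, abs_of_pos hsx, abs_of_pos hca]
    field_simp
  refine ⟨hAbs, ?_⟩
  rw [hAbs]
  rw [div_le_one hca]
  calc (Real.sin a / Real.sin x) ^ 3 * |Real.cos x|
      ≤ 1 ^ 3 * Real.cos a := by
        apply mul_le_mul _ hcos (abs_nonneg _) (by norm_num)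
        apply pow_le_pow_left₀ (by positivity)
        rw [div_le_one hsx]
        exact hsin
    _ = Real.cos a := by ring
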